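/- Let B = (B_t)_{t ≥ 0} be a standard one-dimensional Brownian motion and let ε > 0. Define the random variable M_B := sup over all 0 < s < t < ∞ of |B_t − B_s| / √(h (1 + ln(t/h) + ε|ln t|)), where h = t − s. Then M_B² admits exponential moments, i.e. there exists λ > 0 such that E[exp(λ M_B²)] < ∞. -/

import Mathlib

open MeasureTheory ProbabilityTheory

open scoped NNReal ENNReal
open Real Filter

lemma my_sqrt_add_le {x y : ℝ} (hx : 0 ≤ x) (hy : 0 ≤ y) :
    Real.sqrt (x + y) ≤ Real.sqrt x + Real.sqrt y := by
  rw [show x + y = Real.sqrt x ^ 2 + Real.sqrt y ^ 2 by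
    rw [Real.sq_sqrt hx, Real.sq_sqrt hy]]
  have h : Real.sqrt x ^ 2 + Real.sqrt y ^ 2 ≤ (Real.sqrt x + Real.sqrt y) ^ 2 := by
    nlinarith [Real.sqrt_nonneg x, Real.sqrt_nonneg y]
  calc Real.sqrt (Real.sqrt x ^ 2 + Real.sqrt y ^ 2) ≤
      Real.sqrt ((Real.sqrt x + Real.sqrt y) ^ 2) := Real.sqrt_le_sqrt h
    _ = Real.sqrt x + Real.sqrt y := by
        rw [Real.sqrt_sq (by positivity)]

lemma my_sqrt3_lt : Real.sqrt 3 / 2 < 1 := by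
  rw [div_lt_one (by norm_num)]
  nlinarith [Real.sq_sqrt (by norm_num : (0:ℝ) ≤ 3), Real.sqrt_nonneg 3]

lemma my_u_le (j : ℕ) : Real.sqrt (((j:ℝ)+2) / 2^(j+1)) ≤ (Real.sqrt 3 / 2)^j := by
  induction j with
  | zero =>
    simp only [Nat.cast_zero, zero_add, pow_zero, pow_one]
    norm_num
  | succ j ih =>
    push_cast
    have key : ((j:ℝ)+1+2) / 2^(j+1+1) ≤ (3/4) * (((j:ℝ)+2) / 2^(j+1)) := by
      have h2 : (0:ℝ) < 2^(j+1) := by positivity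
      rw [show (2:ℝ)^(j+1+1) = 2 * 2^(j+1) by ring, div_le_iff₀ (by positivity)]
      have heq : (3:ℝ) / 4 * ((↑j + 2) / 2 ^ (j + 1)) * (2 * 2 ^ (j + 1))
          = 3 * ((j:ℝ) + 2) / 2 := by
        field_simp
        ring
      rw [heq]
      linarith
    have hsq34 : Real.sqrt ((3:ℝ)/4) = Real.sqrt 3 / 2 := by
      rw [Real.sqrt_div (by norm_num : (0:ℝ) ≤ 3) 4,
        show (4:ℝ) = 2^2 by norm_num, Real.sqrt_sq (by norm_num : (0:ℝ) ≤ 2)]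
    calc Real.sqrt (((j:ℝ)+1+2) / 2^(j+1+1))
        ≤ Real.sqrt ((3/4) * (((j:ℝ)+2) / 2^(j+1))) := Real.sqrt_le_sqrt key
      _ = Real.sqrt (3/4) * Real.sqrt (((j:ℝ)+2) / 2^(j+1)) := Real.sqrt_mul (by norm_num) _
      _ ≤ (Real.sqrt 3 / 2) * (Real.sqrt 3 / 2)^j := by
          rw [hsq34]
          exact mul_le_mul_of_nonneg_left ih (by positivity)
      _ = (Real.sqrt 3 / 2)^(j+1) := by ring

lemma my_geom_partial (N : ℕ) : ∑ j ∈ Finset.range N, (Real.sqrt 3 / 2)^j ≤ 8 := by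
  have hr0 : (0:ℝ) ≤ Real.sqrt 3 / 2 := by positivity
  have h1 := Summable.sum_le_tsum (Finset.range N) (fun i _ => pow_nonneg hr0 i)
    (summable_geometric_of_lt_one hr0 my_sqrt3_lt)
  rw [tsum_geometric_of_lt_one hr0 my_sqrt3_lt] at h1
  refine h1.trans ?_
  rw [inv_le_comm₀ (by nlinarith [my_sqrt3_lt]) (by norm_num)]
  nlinarith [Real.sq_sqrt (by norm_num : (0:ℝ) ≤ 3), Real.sqrt_nonneg 3]

lemma my_usum (N : ℕ) : ∑ j ∈ Finset.range N, Real.sqrt (((j:ℝ)+2) / 2^(j+1)) ≤ 8 := by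
  calc ∑ j ∈ Finset.range N, Real.sqrt (((j:ℝ)+2) / 2^(j+1))
      ≤ ∑ j ∈ Finset.range N, (Real.sqrt 3 / 2)^j := Finset.sum_le_sum fun j _ => my_u_le j
    _ ≤ 8 := my_geom_partial N

set_option maxHeartbeats 4000000 in
lemma my_chaining {f : ℝ → ℝ} (hf : Continuous f) {X : ℝ} (hX : 0 ≤ X)
    (H : ∀ (n : ℤ) (k : ℕ), |f (((k:ℝ)+1) * (2:ℝ)^(-n)) - f ((k:ℝ) * (2:ℝ)^(-n))| ≤
      X * Real.sqrt ((2:ℝ)^(-n) * (1 + |(n:ℝ)| + Real.log (2 + (k:ℝ)))))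
    {s t : ℝ} (hs : 0 < s) (hst : s < t) :
    |f t - f s| ≤ 66 * X * Real.sqrt ((t - s) * (1 + Real.log (t/(t-s)) + |Real.log t|)) := by
  have ht : 0 < t := hs.trans hst
  set h : ℝ := t - s with hdef
  have hh : 0 < h := by simp [hdef]; linarith
  obtain ⟨n₁, hn₁l, hn₁u⟩ := exists_mem_Ico_zpow hh one_lt_two
  set n₀ : ℤ := -n₁ with hn₀def
  have hp : ∀ n : ℤ, (0:ℝ) < (2:ℝ)^n := fun n => zpow_pos (by norm_num) n
  have hlow : (2:ℝ)^(-n₀) ≤ h := by simpa [hn₀def] using hn₁l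
  have hhigh : h < 2 * (2:ℝ)^(-n₀) := by
    have : (2:ℝ)^(n₁+1) = 2 * (2:ℝ)^n₁ := by
      rw [zpow_add_one₀ (by norm_num : (2:ℝ) ≠ 0)]; ring
    rw [hn₀def, neg_neg]
    calc h < (2:ℝ)^(n₁+1) := hn₁u
      _ = 2 * (2:ℝ)^n₁ := this
  set tn : ℤ → ℝ := fun n => (⌊(2:ℝ)^n * t⌋ : ℝ) * (2:ℝ)^(-n) with htndef
  set sn : ℤ → ℝ := fun n => (⌈(2:ℝ)^n * s⌉ : ℝ) * (2:ℝ)^(-n) with hsndef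
  set Cb : ℤ → ℝ := fun n => 1 + |(n:ℝ)| + Real.log (3 + (2:ℝ)^n * t) with hCbdef
  set R : ℤ → ℝ := fun n => X * Real.sqrt ((2:ℝ)^(-n) * Cb n) with hRdef
  have hR0 : ∀ n, 0 ≤ R n := fun n => mul_nonneg hX (Real.sqrt_nonneg _)
  -- key application of H
  have key : ∀ (n : ℤ) (k : ℤ), 0 ≤ k → (k:ℝ) + 2 ≤ 3 + (2:ℝ)^n * t →
      |f (((k:ℝ)+1) * (2:ℝ)^(-n)) - f ((k:ℝ) * (2:ℝ)^(-n))| ≤ R n := by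
    intro n k hk hkb
    lift k to ℕ using hk
    refine (H n k).trans ?_
    have hlog : Real.log (2 + (k:ℝ)) ≤ Real.log (3 + (2:ℝ)^n * t) := by
      apply Real.log_le_log (by positivity)
      push_cast at hkb ⊢
      linarith
    apply mul_le_mul_of_nonneg_left _ hX
    apply Real.sqrt_le_sqrt
    apply mul_le_mul_of_nonneg_left _ (hp _).le
    simp only [hCbdef]
    linarith
  -- the step at level n for the t side
  have stepT : ∀ n : ℤ, (1:ℝ) ≤ (2:ℝ)^n * t → |f (tn (n+1)) - f (tn n)| ≤ R (n+1) := by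
    intro n hn
    have h2n1 : (2:ℝ)^(n+1) * t = 2 * ((2:ℝ)^n * t) := by
      rw [zpow_add_one₀ (by norm_num : (2:ℝ) ≠ 0)]; ring
    set b : ℤ := ⌊(2:ℝ)^n * t⌋ with hbdef
    set a : ℤ := ⌊(2:ℝ)^(n+1) * t⌋ with hadef
    have hb1 : 1 ≤ b := Int.le_floor.mpr (by exact_mod_cast hn)
    have hfl1 : (b:ℝ) ≤ (2:ℝ)^n * t := Int.floor_le _
    have hfl2 : (2:ℝ)^n * t < (b:ℝ) + 1 := Int.lt_floor_add_one _
    have hab1 : 2*b ≤ a := by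
      apply Int.le_floor.mpr
      push_cast
      rw [h2n1]; linarith
    have hab2 : a ≤ 2*b + 1 := by
      have h1 : (a:ℝ) ≤ (2:ℝ)^(n+1) * t := Int.floor_le _
      have h2 : (a:ℝ) < 2*(b:ℝ) + 2 := by rw [h2n1] at h1; linarith
      have h3 : a < 2*b + 2 := by exact_mod_cast h2
      omega
    have hpow : (2:ℝ)^(-n) = ((2:ℝ)^(-(n+1))) * 2 := by
      rw [← zpow_add_one₀ (by norm_num : (2:ℝ) ≠ 0)]; ring_nf
    have htn_eq : tn n = ((2*b : ℤ):ℝ) * (2:ℝ)^(-(n+1)) := by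
      simp only [htndef, ← hbdef, hpow]
      push_cast; ring
    have hae : a = 2*b ∨ a = 2*b + 1 := by omega
    rcases hae with hae | hae
    · have : tn (n+1) = tn n := by
        rw [htn_eq]
        simp only [htndef]
        rw [← hadef, hae]
      rw [this, sub_self, abs_zero]
      exact hR0 _
    · have e1 : tn (n+1) = (((2*b:ℤ):ℝ)+1) * (2:ℝ)^(-(n+1)) := by
        simp only [htndef, ← hadef, hae]
        push_cast; ring
      rw [e1, htn_eq]
      apply key (n+1) (2*b) (by omega)
      have : ((2*b:ℤ):ℝ) ≤ (2:ℝ)^(n+1) * t := by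
        calc ((2*b:ℤ):ℝ) ≤ (a:ℝ) := by exact_mod_cast hab1
          _ ≤ (2:ℝ)^(n+1) * t := Int.floor_le _
      push_cast at this ⊢
      linarith
  -- the step at level n for the s side
  have stepS : ∀ n : ℤ, |f (sn n) - f (sn (n+1))| ≤ R (n+1) := by
    intro n
    have h2n1 : (2:ℝ)^(n+1) * s = 2 * ((2:ℝ)^n * s) := by
      rw [zpow_add_one₀ (by norm_num : (2:ℝ) ≠ 0)]; ring
    set b : ℤ := ⌈(2:ℝ)^n * s⌉ with hbdef
    set a : ℤ := ⌈(2:ℝ)^(n+1) * s⌉ with hadef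
    have hb1 : 1 ≤ b := Int.ceil_pos.mpr (by positivity)
    have hcl1 : (2:ℝ)^n * s ≤ (b:ℝ) := Int.le_ceil _
    have hcl2 : (b:ℝ) < (2:ℝ)^n * s + 1 := Int.ceil_lt_add_one _
    have hab1 : a ≤ 2*b := by
      apply Int.ceil_le.mpr
      push_cast
      rw [h2n1]; linarith
    have hab2 : 2*b - 1 ≤ a := by
      have h1 : (2:ℝ)*(b:ℝ) - 2 < (2:ℝ)^(n+1) * s := by rw [h2n1]; linarith
      have := Int.lt_ceil.mpr (show ((2*b-2 : ℤ):ℝ) < (2:ℝ)^(n+1) * s by push_cast; linarith)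
      omega
    have hpow : (2:ℝ)^(-n) = ((2:ℝ)^(-(n+1))) * 2 := by
      rw [← zpow_add_one₀ (by norm_num : (2:ℝ) ≠ 0)]; ring_nf
    have hsn_eq : sn n = ((2*b : ℤ):ℝ) * (2:ℝ)^(-(n+1)) := by
      simp only [hsndef, ← hbdef, hpow]
      push_cast; ring
    have hae : a = 2*b ∨ a = 2*b - 1 := by omega
    rcases hae with hae | hae
    · have : sn (n+1) = sn n := by
        rw [hsn_eq]
        simp only [hsndef]
        rw [← hadef, hae]
      rw [this, sub_self, abs_zero]
      exact hR0 _
    · have e1 : sn (n+1) = (((2*b-1:ℤ):ℝ)) * (2:ℝ)^(-(n+1)) := by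
        simp only [hsndef, ← hadef, hae]
      have e2 : sn n = (((2*b-1:ℤ):ℝ)+1) * (2:ℝ)^(-(n+1)) := by
        rw [hsn_eq]; push_cast; ring
      rw [e1, e2]
      apply key (n+1) (2*b-1) (by omega)
      have hst' : (2:ℝ)^(n+1) * s ≤ (2:ℝ)^(n+1) * t :=
        mul_le_mul_of_nonneg_left hst.le (hp _).le
      push_cast
      linarith
  -- the base increment
  have base : |f (tn n₀) - f (sn n₀)| ≤ R n₀ := by
    set c : ℤ := ⌊(2:ℝ)^n₀ * t⌋ with hcdef
    set b : ℤ := ⌈(2:ℝ)^n₀ * s⌉ with hbdef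
    have hfl1 : (c:ℝ) ≤ (2:ℝ)^n₀ * t := Int.floor_le _
    have hfl2 : (2:ℝ)^n₀ * t < (c:ℝ) + 1 := Int.lt_floor_add_one _
    have hcl1 : (2:ℝ)^n₀ * s ≤ (b:ℝ) := Int.le_ceil _
    have hcl2 : (b:ℝ) < (2:ℝ)^n₀ * s + 1 := Int.ceil_lt_add_one _
    have hb1 : 1 ≤ b := Int.ceil_pos.mpr (by positivity)
    have h2h1 : (1:ℝ) ≤ (2:ℝ)^n₀ * h := by
      have := mul_le_mul_of_nonneg_left hlow (hp n₀).le
      rw [← zpow_add₀ (by norm_num : (2:ℝ) ≠ 0)] at this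
      simpa using this
    have h2h2 : (2:ℝ)^n₀ * h < 2 := by
      have := mul_lt_mul_of_pos_left hhigh (hp n₀)
      rw [show (2:ℝ)^n₀ * (2 * (2:ℝ)^(-n₀)) = 2 * ((2:ℝ)^n₀ * (2:ℝ)^(-n₀)) by ring,
        ← zpow_add₀ (by norm_num : (2:ℝ) ≠ 0)] at this
      simpa using this
    have hsprd : (2:ℝ)^n₀ * h = (2:ℝ)^n₀ * t - (2:ℝ)^n₀ * s := by rw [hdef]; ring
    have hcb1 : c - b ≤ 1 := by
      have : (c:ℝ) - (b:ℝ) < 2 := by rw [hsprd] at h2h2; linarith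
      have : ((c - b : ℤ):ℝ) < 2 := by push_cast; linarith
      exact_mod_cast Int.lt_add_one_iff.mp (by exact_mod_cast this)
    have hcb2 : 0 ≤ c - b := by
      have : (-1:ℝ) < (c:ℝ) - (b:ℝ) := by rw [hsprd] at h2h1; linarith
      have : (-1 : ℝ) < ((c - b : ℤ):ℝ) := by push_cast; linarith
      have := Int.lt_iff_add_one_le.mp (show (-1:ℤ) < c - b by exact_mod_cast this)
      omega
    have hae : c = b ∨ c = b + 1 := by omega
    rcases hae with hae | hae
    · have : tn n₀ = sn n₀ := by simp only [htndef, hsndef, ← hcdef, ← hbdef, hae]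
      rw [this, sub_self, abs_zero]
      exact hR0 _
    · have e1 : tn n₀ = ((b:ℝ)+1) * (2:ℝ)^(-n₀) := by
        simp only [htndef, ← hcdef, hae]; push_cast; ring
      have e2 : sn n₀ = (b:ℝ) * (2:ℝ)^(-n₀) := by simp only [hsndef, ← hbdef]
      rw [e1, e2]
      apply key n₀ b (by omega)
      have hst' : (2:ℝ)^n₀ * s ≤ (2:ℝ)^n₀ * t :=
        mul_le_mul_of_nonneg_left hst.le (hp _).le
      linarith
  have hid : ∀ n : ℤ, (2:ℝ)^n * (2:ℝ)^(-n) = 1 := by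
    intro n
    rw [← zpow_add₀ (by norm_num : (2:ℝ) ≠ 0)]
    simp
  have h2h1 : (1:ℝ) ≤ (2:ℝ)^n₀ * h := by
    have := mul_le_mul_of_nonneg_left hlow (hp n₀).le
    rwa [hid n₀] at this
  -- generic bound on Cb
  have hlog2_le : Real.log 2 ≤ 1 := by
    have := Real.log_two_lt_d9
    linarith
  have hCbB : ∀ n : ℤ, Cb n ≤ 3 + 2*|(n:ℝ)| + |Real.log t| := by
    intro n
    have hy : 0 < (2:ℝ)^n * t := by positivity
    have l1 : Real.log (3 + (2:ℝ)^n * t) ≤ Real.log 3 + Real.log (1 + (2:ℝ)^n * t) := by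
      rw [← Real.log_mul (by norm_num) (by positivity)]
      apply Real.log_le_log (by positivity)
      nlinarith
    have l2 : Real.log (1 + (2:ℝ)^n * t) ≤ Real.log 2 + |(n:ℝ)| + |Real.log t| := by
      rcases le_or_gt ((2:ℝ)^n * t) 1 with hc | hc
      · have h1 : Real.log (1 + (2:ℝ)^n*t) ≤ Real.log 2 :=
          Real.log_le_log (by positivity) (by linarith)
        have h2 := abs_nonneg ((n:ℝ))
        have h3 := abs_nonneg (Real.log t)
        linarith
      · have h1 : Real.log (1 + (2:ℝ)^n * t) ≤ Real.log (2 * ((2:ℝ)^n * t)) := by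
          apply Real.log_le_log (by positivity)
          nlinarith
        rw [Real.log_mul (by norm_num) (ne_of_gt hy),
          Real.log_mul (ne_of_gt (hp n)) (ne_of_gt ht), Real.log_zpow] at h1
        have h2 : (n:ℝ) * Real.log 2 ≤ |(n:ℝ)| := by
          calc (n:ℝ) * Real.log 2 ≤ |(n:ℝ) * Real.log 2| := le_abs_self _
            _ = |(n:ℝ)| * |Real.log 2| := abs_mul _ _
            _ ≤ |(n:ℝ)| * 1 := by
                apply mul_le_mul_of_nonneg_left _ (abs_nonneg _)
                rw [abs_of_nonneg (Real.log_nonneg one_le_two)]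
                exact hlog2_le
            _ = |(n:ℝ)| := mul_one _
        have h3 : Real.log t ≤ |Real.log t| := le_abs_self _
        linarith
    have l3 : Real.log 3 + Real.log 2 ≤ 2 := by
      rw [← Real.log_mul (by norm_num) (by norm_num)]
      have he : Real.exp 2 = Real.exp 1 * Real.exp 1 := by
        rw [← Real.exp_add]; norm_num
      have h6 : (6:ℝ) ≤ Real.exp 2 := by
        have := Real.exp_one_gt_d9
        nlinarith
      calc Real.log (3*2) ≤ Real.log (Real.exp 2) := Real.log_le_log (by norm_num) (by norm_num at h6 ⊢; linarith)
        _ = 2 := Real.log_exp 2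
    simp only [hCbdef]
    linarith
  set A : ℝ := Real.sqrt 3 * Real.sqrt (1 + |(n₀:ℝ)|) + Real.sqrt |Real.log t| with hAdef
  have hA0 : 0 ≤ A := by positivity
  -- bound on each summand
  have hRj : ∀ j : ℕ, R (n₀ + (j:ℤ) + 1) ≤
      X * (Real.sqrt ((2:ℝ)^(-n₀)) * A * Real.sqrt (((j:ℝ)+2)/2^(j+1))) := by
    intro j
    have e2 : (2:ℝ)^(-(n₀ + (j:ℤ) + 1)) = (2:ℝ)^(-n₀) * ((1:ℝ)/2^(j+1)) := by
      rw [show -(n₀ + (j:ℤ) + 1) = -n₀ + (-((j:ℤ)+1)) by ring,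
        zpow_add₀ (by norm_num : (2:ℝ) ≠ 0)]
      congr 1
      rw [show ((j:ℤ)+1) = ((j+1:ℕ):ℤ) by push_cast; ring]
      rw [zpow_neg, zpow_natCast, one_div]
    have habs : |((n₀ + (j:ℤ) + 1 : ℤ):ℝ)| ≤ |(n₀:ℝ)| + (j:ℝ) + 1 := by
      push_cast
      calc |(n₀:ℝ) + (j:ℝ) + 1| ≤ |(n₀:ℝ)| + |(j:ℝ) + 1| := by
            rw [add_assoc]; exact abs_add_le _ _
        _ = |(n₀:ℝ)| + ((j:ℝ) + 1) := by
            rw [abs_of_nonneg (show (0:ℝ) ≤ (j:ℝ) + 1 by positivity)]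
        _ = |(n₀:ℝ)| + (j:ℝ) + 1 := by ring
    have hCbj : Cb (n₀ + (j:ℤ) + 1) ≤ 3*(1+|(n₀:ℝ)|)*((j:ℝ)+2) + |Real.log t| := by
      have h1 := hCbB (n₀ + (j:ℤ) + 1)
      have h2 : (0:ℝ) ≤ |(n₀:ℝ)| := abs_nonneg _
      have h3 : (0:ℝ) ≤ (j:ℝ) := Nat.cast_nonneg _
      nlinarith
    have hw : (0:ℝ) < (1:ℝ)/2^(j+1) := by positivity
    calc R (n₀ + (j:ℤ) + 1) = X * Real.sqrt ((2:ℝ)^(-(n₀ + (j:ℤ) + 1)) * Cb (n₀ + (j:ℤ) + 1)) := rfl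
      _ ≤ X * Real.sqrt ((2:ℝ)^(-n₀) * ((3*(1+|(n₀:ℝ)|)*((j:ℝ)+2) + |Real.log t|) * ((1:ℝ)/2^(j+1)))) := by
          apply mul_le_mul_of_nonneg_left _ hX
          apply Real.sqrt_le_sqrt
          rw [e2, mul_assoc]
          apply mul_le_mul_of_nonneg_left _ (hp _).le
          rw [mul_comm ((1:ℝ)/2^(j+1))]
          exact mul_le_mul_of_nonneg_right hCbj hw.le
      _ = X * (Real.sqrt ((2:ℝ)^(-n₀)) *
            Real.sqrt ((3*(1+|(n₀:ℝ)|)*((j:ℝ)+2) + |Real.log t|) * ((1:ℝ)/2^(j+1)))) := by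
          rw [Real.sqrt_mul (hp _).le]
      _ ≤ X * (Real.sqrt ((2:ℝ)^(-n₀)) * (A * Real.sqrt (((j:ℝ)+2)/2^(j+1)))) := by
          apply mul_le_mul_of_nonneg_left _ hX
          apply mul_le_mul_of_nonneg_left _ (Real.sqrt_nonneg _)
          have split : (3*(1+|(n₀:ℝ)|)*((j:ℝ)+2) + |Real.log t|) * ((1:ℝ)/2^(j+1))
              = 3*(1+|(n₀:ℝ)|)*(((j:ℝ)+2)/2^(j+1)) + |Real.log t| * ((1:ℝ)/2^(j+1)) := by
            ring
          rw [split]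
          refine (my_sqrt_add_le (by positivity) (by positivity)).trans ?_
          have t1 : Real.sqrt (3*(1+|(n₀:ℝ)|)*(((j:ℝ)+2)/2^(j+1)))
              = Real.sqrt 3 * Real.sqrt (1+|(n₀:ℝ)|) * Real.sqrt (((j:ℝ)+2)/2^(j+1)) := by
            rw [Real.sqrt_mul (by positivity), Real.sqrt_mul (by norm_num : (0:ℝ) ≤ 3)]
          have t2 : Real.sqrt (|Real.log t| * ((1:ℝ)/2^(j+1)))
              ≤ Real.sqrt |Real.log t| * Real.sqrt (((j:ℝ)+2)/2^(j+1)) := by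
            rw [Real.sqrt_mul (abs_nonneg _)]
            apply mul_le_mul_of_nonneg_left _ (Real.sqrt_nonneg _)
            apply Real.sqrt_le_sqrt
            rw [div_le_div_iff₀ (by positivity) (by positivity)]
            have hj0 : (0:ℝ) ≤ (j:ℝ) := Nat.cast_nonneg j
            nlinarith [pow_pos (show (0:ℝ) < 2 by norm_num) (j+1)]
          rw [t1]
          simp only [hAdef, add_mul]
          exact add_le_add (le_of_eq (by ring)) t2
      _ = X * (Real.sqrt ((2:ℝ)^(-n₀)) * A * Real.sqrt (((j:ℝ)+2)/2^(j+1))) := by ring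
  have hsum : ∀ N : ℕ, ∑ j ∈ Finset.range N, R (n₀ + (j:ℤ) + 1) ≤
      X * (Real.sqrt ((2:ℝ)^(-n₀)) * A) * 8 := by
    intro N
    calc ∑ j ∈ Finset.range N, R (n₀ + (j:ℤ) + 1)
        ≤ ∑ j ∈ Finset.range N, X * (Real.sqrt ((2:ℝ)^(-n₀)) * A * Real.sqrt (((j:ℝ)+2)/2^(j+1))) :=
          Finset.sum_le_sum (fun j _ => hRj j)
      _ = ∑ j ∈ Finset.range N, (X * (Real.sqrt ((2:ℝ)^(-n₀)) * A)) * Real.sqrt (((j:ℝ)+2)/2^(j+1)) := by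
          apply Finset.sum_congr rfl
          intro j _
          ring
      _ = (X * (Real.sqrt ((2:ℝ)^(-n₀)) * A)) * ∑ j ∈ Finset.range N, Real.sqrt (((j:ℝ)+2)/2^(j+1)) := by
          rw [← Finset.mul_sum]
      _ ≤ (X * (Real.sqrt ((2:ℝ)^(-n₀)) * A)) * 8 := by
          apply mul_le_mul_of_nonneg_left (my_usum N) (by positivity)
  -- telescoping
  set F : ℕ → ℝ := fun N => f (tn (n₀ + (N:ℤ))) - f (sn (n₀ + (N:ℤ))) with hFdef
  have hstep : ∀ j : ℕ, |F (j+1) - F j| ≤ 2 * R (n₀ + (j:ℤ) + 1) := by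
    intro j
    have ht1 : (1:ℝ) ≤ (2:ℝ)^(n₀ + (j:ℤ)) * t := by
      have h1 : (2:ℝ)^n₀ ≤ (2:ℝ)^(n₀ + (j:ℤ)) :=
        zpow_le_zpow_right₀ one_le_two (by omega)
      have h2 : (2:ℝ)^n₀ * h ≤ (2:ℝ)^n₀ * t := by
        apply mul_le_mul_of_nonneg_left _ (hp _).le
        simp only [hdef]; linarith
      have h3 : (2:ℝ)^n₀ * t ≤ (2:ℝ)^(n₀ + (j:ℤ)) * t :=
        mul_le_mul_of_nonneg_right h1 ht.le
      linarith
    have hT := stepT (n₀ + (j:ℤ)) ht1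
    have hS := stepS (n₀ + (j:ℤ))
    have hc : ((j+1:ℕ):ℤ) = (j:ℤ) + 1 := by push_cast; ring
    have eF : F (j+1) - F j = (f (tn (n₀ + (j:ℤ) + 1)) - f (tn (n₀ + (j:ℤ))))
        + (f (sn (n₀ + (j:ℤ))) - f (sn (n₀ + (j:ℤ) + 1))) := by
      simp only [hFdef, hc]
      rw [show n₀ + ((j:ℤ) + 1) = n₀ + (j:ℤ) + 1 by ring]
      ring
    rw [eF]
    calc _ ≤ |f (tn (n₀ + (j:ℤ) + 1)) - f (tn (n₀ + (j:ℤ)))|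
        + |f (sn (n₀ + (j:ℤ))) - f (sn (n₀ + (j:ℤ) + 1))| := abs_add_le _ _
      _ ≤ R (n₀ + (j:ℤ) + 1) + R (n₀ + (j:ℤ) + 1) := add_le_add hT hS
      _ = 2 * R (n₀ + (j:ℤ) + 1) := by ring
  have htel : ∀ N : ℕ, |F N| ≤ R n₀ + 2 * (X * (Real.sqrt ((2:ℝ)^(-n₀)) * A) * 8) := by
    intro N
    have e0 : F N = F 0 + ∑ j ∈ Finset.range N, (F (j+1) - F j) := by
      rw [Finset.sum_range_sub F]
      ring
    have b0 : |F 0| ≤ R n₀ := by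
      simp only [hFdef, Nat.cast_zero, add_zero]
      exact base
    calc |F N| ≤ |F 0| + |∑ j ∈ Finset.range N, (F (j+1) - F j)| := by
          rw [e0]; exact abs_add_le _ _
      _ ≤ R n₀ + ∑ j ∈ Finset.range N, |F (j+1) - F j| :=
          add_le_add b0 (Finset.abs_sum_le_sum_abs _ _)
      _ ≤ R n₀ + ∑ j ∈ Finset.range N, 2 * R (n₀ + (j:ℤ) + 1) :=
          add_le_add (le_refl _) (Finset.sum_le_sum (fun j _ => hstep j))
      _ = R n₀ + 2 * ∑ j ∈ Finset.range N, R (n₀ + (j:ℤ) + 1) := by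
          rw [Finset.mul_sum]
      _ ≤ R n₀ + 2 * (X * (Real.sqrt ((2:ℝ)^(-n₀)) * A) * 8) := by
          have := hsum N
          linarith
  -- limits
  have hpowlim : Tendsto (fun N : ℕ => (2:ℝ)^(-(n₀ + (N:ℤ)))) atTop (nhds 0) := by
    have he : ∀ N : ℕ, (2:ℝ)^(-(n₀ + (N:ℤ))) = (2:ℝ)^(-n₀) * ((1:ℝ)/2)^N := by
      intro N
      rw [show -(n₀ + (N:ℤ)) = -n₀ + (-(N:ℤ)) by ring, zpow_add₀ (by norm_num : (2:ℝ) ≠ 0)]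
      congr 1
      rw [zpow_neg, zpow_natCast]
      rw [one_div, inv_pow]
    have h2 : Tendsto (fun N : ℕ => ((1:ℝ)/2)^N) atTop (nhds 0) :=
      tendsto_pow_atTop_nhds_zero_of_lt_one (by norm_num) (by norm_num)
    have h3 := h2.const_mul ((2:ℝ)^(-n₀))
    rw [mul_zero] at h3
    refine h3.congr (fun N => (he N).symm)
  have htlim : Tendsto (fun N : ℕ => tn (n₀ + (N:ℤ))) atTop (nhds t) := by
    apply tendsto_of_tendsto_of_tendsto_of_le_of_le
      (g := fun N : ℕ => t - (2:ℝ)^(-(n₀ + (N:ℤ)))) (h := fun _ : ℕ => t)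
    · have hconst : Filter.Tendsto (fun _ : ℕ => t) atTop (nhds t) := tendsto_const_nhds
      have h4 := hconst.sub hpowlim
      rw [sub_zero] at h4
      exact h4
    · exact tendsto_const_nhds
    · intro N
      have h1 : (2:ℝ)^(n₀+(N:ℤ)) * t - 1 < (⌊(2:ℝ)^(n₀+(N:ℤ)) * t⌋ : ℝ) :=
        Int.sub_one_lt_floor _
      have h2 : ((2:ℝ)^(n₀+(N:ℤ)) * t - 1) * (2:ℝ)^(-(n₀+(N:ℤ)))
          ≤ (⌊(2:ℝ)^(n₀+(N:ℤ)) * t⌋ : ℝ) * (2:ℝ)^(-(n₀+(N:ℤ))) :=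
        mul_le_mul_of_nonneg_right h1.le (hp _).le
      have h3 : ((2:ℝ)^(n₀+(N:ℤ)) * t - 1) * (2:ℝ)^(-(n₀+(N:ℤ)))
          = t * ((2:ℝ)^(n₀+(N:ℤ)) * (2:ℝ)^(-(n₀+(N:ℤ)))) - (2:ℝ)^(-(n₀+(N:ℤ))) := by ring
      rw [h3, hid _, mul_one] at h2
      show t - (2:ℝ)^(-(n₀+(N:ℤ))) ≤ (⌊(2:ℝ)^(n₀+(N:ℤ)) * t⌋ : ℝ) * (2:ℝ)^(-(n₀+(N:ℤ)))
      linarith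
    · intro N
      have h1 : (⌊(2:ℝ)^(n₀+(N:ℤ)) * t⌋ : ℝ) ≤ (2:ℝ)^(n₀+(N:ℤ)) * t := Int.floor_le _
      have h2 : (⌊(2:ℝ)^(n₀+(N:ℤ)) * t⌋ : ℝ) * (2:ℝ)^(-(n₀+(N:ℤ)))
          ≤ ((2:ℝ)^(n₀+(N:ℤ)) * t) * (2:ℝ)^(-(n₀+(N:ℤ))) :=
        mul_le_mul_of_nonneg_right h1 (hp _).le
      have h3 : ((2:ℝ)^(n₀+(N:ℤ)) * t) * (2:ℝ)^(-(n₀+(N:ℤ)))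
          = t * ((2:ℝ)^(n₀+(N:ℤ)) * (2:ℝ)^(-(n₀+(N:ℤ)))) := by ring
      rw [h3, hid _, mul_one] at h2
      exact h2
  have hslim : Tendsto (fun N : ℕ => sn (n₀ + (N:ℤ))) atTop (nhds s) := by
    apply tendsto_of_tendsto_of_tendsto_of_le_of_le
      (g := fun _ : ℕ => s) (h := fun N : ℕ => s + (2:ℝ)^(-(n₀ + (N:ℤ))))
    · exact tendsto_const_nhds
    · have hconst : Filter.Tendsto (fun _ : ℕ => s) atTop (nhds s) := tendsto_const_nhds
      have h4 := hconst.add hpowlim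
      rw [add_zero] at h4
      exact h4
    · intro N
      have h1 : (2:ℝ)^(n₀+(N:ℤ)) * s ≤ (⌈(2:ℝ)^(n₀+(N:ℤ)) * s⌉ : ℝ) := Int.le_ceil _
      have h2 : ((2:ℝ)^(n₀+(N:ℤ)) * s) * (2:ℝ)^(-(n₀+(N:ℤ)))
          ≤ (⌈(2:ℝ)^(n₀+(N:ℤ)) * s⌉ : ℝ) * (2:ℝ)^(-(n₀+(N:ℤ))) :=
        mul_le_mul_of_nonneg_right h1 (hp _).le
      have h3 : ((2:ℝ)^(n₀+(N:ℤ)) * s) * (2:ℝ)^(-(n₀+(N:ℤ)))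
          = s * ((2:ℝ)^(n₀+(N:ℤ)) * (2:ℝ)^(-(n₀+(N:ℤ)))) := by ring
      rw [h3, hid _, mul_one] at h2
      exact h2
    · intro N
      have h1 : (⌈(2:ℝ)^(n₀+(N:ℤ)) * s⌉ : ℝ) < (2:ℝ)^(n₀+(N:ℤ)) * s + 1 := Int.ceil_lt_add_one _
      have h2 : (⌈(2:ℝ)^(n₀+(N:ℤ)) * s⌉ : ℝ) * (2:ℝ)^(-(n₀+(N:ℤ)))
          ≤ ((2:ℝ)^(n₀+(N:ℤ)) * s + 1) * (2:ℝ)^(-(n₀+(N:ℤ))) :=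
        mul_le_mul_of_nonneg_right h1.le (hp _).le
      have h3 : ((2:ℝ)^(n₀+(N:ℤ)) * s + 1) * (2:ℝ)^(-(n₀+(N:ℤ)))
          = s * ((2:ℝ)^(n₀+(N:ℤ)) * (2:ℝ)^(-(n₀+(N:ℤ)))) + (2:ℝ)^(-(n₀+(N:ℤ))) := by ring
      rw [h3, hid _, mul_one] at h2
      exact h2
  have hFlim : Tendsto F atTop (nhds (f t - f s)) :=
    ((hf.tendsto t).comp htlim).sub ((hf.tendsto s).comp hslim)
  have hfin : |f t - f s| ≤ R n₀ + 2 * (X * (Real.sqrt ((2:ℝ)^(-n₀)) * A) * 8) :=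
    le_of_tendsto hFlim.abs (Filter.Eventually.of_forall htel)
  -- numeric conclusion
  set L₁ : ℝ := 1 + Real.log (t/h) + |Real.log t| with hL₁def
  have hlogth : 0 ≤ Real.log (t/h) := Real.log_nonneg (by rw [le_div_iff₀ hh]; linarith)
  have hL₁1 : 1 ≤ L₁ := by
    have := abs_nonneg (Real.log t)
    simp only [hL₁def]
    linarith
  have hlogh_le : |Real.log h| ≤ Real.log (t/h) + |Real.log t| := by
    have e : Real.log h = Real.log t - Real.log (t/h) := by
      rw [Real.log_div (ne_of_gt ht) (ne_of_gt hh)]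
      ring
    calc |Real.log h| = |Real.log t - Real.log (t/h)| := by rw [e]
      _ ≤ |Real.log t| + |Real.log (t/h)| := abs_sub _ _
      _ = |Real.log t| + Real.log (t/h) := by rw [abs_of_nonneg hlogth]
      _ = Real.log (t/h) + |Real.log t| := by ring
  have hlog2pos : (0:ℝ) < Real.log 2 := Real.log_pos one_lt_two
  have hn0abs : |(n₀:ℝ)| * Real.log 2 ≤ |Real.log h| + Real.log 2 := by
    have e1 : Real.log ((2:ℝ)^(-n₀)) = ((-n₀ : ℤ):ℝ) * Real.log 2 := Real.log_zpow 2 (-n₀)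
    have l1 : ((-n₀:ℤ):ℝ) * Real.log 2 ≤ Real.log h := by
      rw [← e1]
      exact Real.log_le_log (hp _) hlow
    have l2 : Real.log h < Real.log 2 + ((-n₀:ℤ):ℝ) * Real.log 2 := by
      have := Real.log_lt_log hh hhigh
      rwa [Real.log_mul (by norm_num) (ne_of_gt (hp _)), e1] at this
    push_cast at l1 l2
    rw [show |(n₀:ℝ)| * Real.log 2 = |(n₀:ℝ) * Real.log 2| by
      rw [abs_mul, abs_of_nonneg hlog2pos.le]]
    apply abs_le.mpr
    ring_nf at l1 l2 ⊢
    constructor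
    · have := le_abs_self (Real.log h)
      linarith
    · have := neg_abs_le (Real.log h)
      linarith
  have hlog2b : (2:ℝ)/3 ≤ Real.log 2 := by
    have := Real.log_two_gt_d9
    linarith
  have hn0L : 1 + |(n₀:ℝ)| ≤ 2 * L₁ := by
    have h1 : |(n₀:ℝ)| ≤ (3/2) * |Real.log h| + 1 := by
      nlinarith [hn0abs, hlog2b, abs_nonneg (Real.log h), abs_nonneg ((n₀:ℝ))]
    simp only [hL₁def]
    have := abs_nonneg (Real.log t)
    linarith [hlogh_le]
  have hsq2 : Real.sqrt (1 + |(n₀:ℝ)|) ≤ Real.sqrt 2 * Real.sqrt L₁ := by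
    rw [← Real.sqrt_mul (by norm_num : (0:ℝ) ≤ 2)]
    exact Real.sqrt_le_sqrt hn0L
  have hsqlt : Real.sqrt |Real.log t| ≤ Real.sqrt L₁ :=
    Real.sqrt_le_sqrt (by simp only [hL₁def]; linarith)
  have hA_le : A ≤ 7/2 * Real.sqrt L₁ := by
    have s6 : Real.sqrt 3 * Real.sqrt 2 ≤ 5/2 := by
      rw [← Real.sqrt_mul (by norm_num : (0:ℝ) ≤ 3)]
      rw [show (3:ℝ)*2 = 6 by norm_num]
      rw [show (5:ℝ)/2 = Real.sqrt ((5/2)^2) from (Real.sqrt_sq (by norm_num)).symm]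
      exact Real.sqrt_le_sqrt (by norm_num)
    have c1 : Real.sqrt 3 * Real.sqrt (1 + |(n₀:ℝ)|) ≤ Real.sqrt 3 * (Real.sqrt 2 * Real.sqrt L₁) :=
      mul_le_mul_of_nonneg_left hsq2 (Real.sqrt_nonneg 3)
    have c2 : Real.sqrt 3 * (Real.sqrt 2 * Real.sqrt L₁) ≤ (5/2) * Real.sqrt L₁ := by
      rw [← mul_assoc]
      exact mul_le_mul_of_nonneg_right s6 (Real.sqrt_nonneg _)
    simp only [hAdef]
    linarith
  have hRn₀ : R n₀ ≤ X * (Real.sqrt ((2:ℝ)^(-n₀)) * A) := by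
    have h1 : Cb n₀ ≤ 3*(1+|(n₀:ℝ)|) + |Real.log t| := by
      have := hCbB n₀
      have := abs_nonneg ((n₀:ℝ))
      linarith
    calc R n₀ ≤ X * Real.sqrt ((2:ℝ)^(-n₀) * (3*(1+|(n₀:ℝ)|) + |Real.log t|)) := by
          apply mul_le_mul_of_nonneg_left _ hX
          exact Real.sqrt_le_sqrt (mul_le_mul_of_nonneg_left h1 (hp _).le)
      _ = X * (Real.sqrt ((2:ℝ)^(-n₀)) * Real.sqrt (3*(1+|(n₀:ℝ)|) + |Real.log t|)) := by
          rw [Real.sqrt_mul (hp _).le]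
      _ ≤ X * (Real.sqrt ((2:ℝ)^(-n₀)) * A) := by
          apply mul_le_mul_of_nonneg_left _ hX
          apply mul_le_mul_of_nonneg_left _ (Real.sqrt_nonneg _)
          refine (my_sqrt_add_le (by positivity) (abs_nonneg _)).trans ?_
          rw [hAdef, Real.sqrt_mul (by norm_num : (0:ℝ) ≤ 3)]
  have hsqh : Real.sqrt ((2:ℝ)^(-n₀)) ≤ Real.sqrt h := Real.sqrt_le_sqrt hlow
  have c1 : X * (Real.sqrt ((2:ℝ)^(-n₀)) * A) ≤ X * (Real.sqrt h * (7/2 * Real.sqrt L₁)) := by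
    apply mul_le_mul_of_nonneg_left _ hX
    apply mul_le_mul hsqh hA_le hA0 (Real.sqrt_nonneg h)
  have final : |f t - f s| ≤ 17 * (X * (Real.sqrt h * (7/2 * Real.sqrt L₁))) := by
    calc |f t - f s| ≤ R n₀ + 2 * (X * (Real.sqrt ((2:ℝ)^(-n₀)) * A) * 8) := hfin
      _ = R n₀ + 16 * (X * (Real.sqrt ((2:ℝ)^(-n₀)) * A)) := by ring
      _ ≤ X * (Real.sqrt ((2:ℝ)^(-n₀)) * A) + 16 * (X * (Real.sqrt ((2:ℝ)^(-n₀)) * A)) := by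
          linarith [hRn₀]
      _ = 17 * (X * (Real.sqrt ((2:ℝ)^(-n₀)) * A)) := by ring
      _ ≤ 17 * (X * (Real.sqrt h * (7/2 * Real.sqrt L₁))) := by linarith [c1]
  have hmul : Real.sqrt h * Real.sqrt L₁ = Real.sqrt (h * L₁) := (Real.sqrt_mul hh.le _).symm
  calc |f t - f s| ≤ 17 * (X * (Real.sqrt h * (7/2 * Real.sqrt L₁))) := final
    _ = (119/2) * X * (Real.sqrt h * Real.sqrt L₁) := by ring
    _ = (119/2) * X * Real.sqrt (h * L₁) := by rw [hmul]
    _ ≤ 66 * X * Real.sqrt (h * L₁) := by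
        nlinarith [Real.sqrt_nonneg (h * L₁), hX,
          mul_nonneg hX (Real.sqrt_nonneg (h * L₁))]

lemma my_gauss_bound {v c : ℝ} (hv : 0 < v) (hc : 1 ≤ c) :
    ∫⁻ x, ENNReal.ofReal (max (Real.exp (x^2 / (4*(v*c))) - Real.exp ((9:ℝ)/4)) 0)
      ∂(gaussianReal 0 (Real.toNNReal v)) ≤ ENNReal.ofReal (2 * Real.exp (-(9/8)*c)) := by
  have hvne : (Real.toNNReal v) ≠ 0 := by
    simp only [ne_eq, Real.toNNReal_eq_zero, not_le]
    linarith
  have hvv : ((Real.toNNReal v : ℝ≥0) : ℝ) = v := Real.coe_toNNReal v hv.le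
  have hFm : Measurable fun x : ℝ =>
      ENNReal.ofReal (max (Real.exp (x^2 / (4*(v*c))) - Real.exp ((9:ℝ)/4)) 0) := by
    apply Measurable.ennreal_ofReal
    apply Measurable.max _ measurable_const
    apply Measurable.sub _ measurable_const
    exact (Real.continuous_exp.comp ((continuous_pow 2).div_const _)).measurable
  rw [gaussianReal_of_var_ne_zero 0 hvne,
    lintegral_withDensity_eq_lintegral_mul _ (measurable_gaussianPDF 0 _) hFm]
  set K : ℝ := (Real.sqrt (2*π*v))⁻¹ * Real.exp (-(9/8)*c) with hKdef
  have hπ := Real.pi_pos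
  have hsq : 0 < Real.sqrt (2*π*v) := Real.sqrt_pos.mpr (by positivity)
  have hpt : ∀ x : ℝ, gaussianPDF 0 (Real.toNNReal v) x *
      ENNReal.ofReal (max (Real.exp (x^2 / (4*(v*c))) - Real.exp ((9:ℝ)/4)) 0)
      ≤ ENNReal.ofReal (K * Real.exp (-(1/(8*v)) * x^2)) := by
    intro x
    rw [gaussianPDF, ← ENNReal.ofReal_mul (by
      unfold gaussianPDFReal; positivity)]
    apply ENNReal.ofReal_le_ofReal
    unfold gaussianPDFReal
    rw [hvv]
    rcases le_or_gt (x^2) (9*(v*c)) with hx | hx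
    · have hmax : max (Real.exp (x^2 / (4*(v*c))) - Real.exp ((9:ℝ)/4)) 0 = 0 := by
        apply max_eq_right
        apply sub_nonpos.mpr
        apply Real.exp_le_exp.mpr
        rw [div_le_iff₀ (by positivity)]
        nlinarith
      rw [hmax, mul_zero]
      positivity
    · have hmax : max (Real.exp (x^2 / (4*(v*c))) - Real.exp ((9:ℝ)/4)) 0
          ≤ Real.exp (x^2 / (4*(v*c))) :=
        max_le (by linarith [Real.exp_pos ((9:ℝ)/4)]) (Real.exp_pos _).le
      have hexp : Real.exp (-(x-0)^2/(2*v)) * Real.exp (x^2 / (4*(v*c)))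
          ≤ Real.exp (-(9/8)*c) * Real.exp (-(1/(8*v)) * x^2) := by
        rw [← Real.exp_add, ← Real.exp_add]
        apply Real.exp_le_exp.mpr
        have key1 : x^2/(4*(v*c)) ≤ x^2/(4*v) := by
          apply div_le_div_of_nonneg_left (by positivity) (by positivity)
          nlinarith
        have key2 : (9/8)*c ≤ x^2/(8*v) := by
          rw [le_div_iff₀ (by positivity)]
          nlinarith
        have e1 : -(x-0)^2/(2*v) = -(x^2/(8*v))*4 := by ring
        have e2 : x^2/(4*v) = x^2/(8*v) + x^2/(8*v) := by ring
        have e3 : -(1/(8*v))*x^2 = -(x^2/(8*v)) := by ring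
        rw [e1, e3]
        linarith
      calc (Real.sqrt (2*π*v))⁻¹ * Real.exp (-(x-0)^2/(2*v)) *
            max (Real.exp (x^2 / (4*(v*c))) - Real.exp ((9:ℝ)/4)) 0
          ≤ (Real.sqrt (2*π*v))⁻¹ * Real.exp (-(x-0)^2/(2*v)) * Real.exp (x^2 / (4*(v*c))) := by
            apply mul_le_mul_of_nonneg_left hmax (by positivity)
        _ = (Real.sqrt (2*π*v))⁻¹ * (Real.exp (-(x-0)^2/(2*v)) * Real.exp (x^2 / (4*(v*c)))) := by
            ring
        _ ≤ (Real.sqrt (2*π*v))⁻¹ * (Real.exp (-(9/8)*c) * Real.exp (-(1/(8*v)) * x^2)) := by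
            apply mul_le_mul_of_nonneg_left hexp (by positivity)
        _ = K * Real.exp (-(1/(8*v)) * x^2) := by rw [hKdef]; ring
  calc ∫⁻ x, gaussianPDF 0 (Real.toNNReal v) x *
        ENNReal.ofReal (max (Real.exp (x^2 / (4*(v*c))) - Real.exp ((9:ℝ)/4)) 0) ∂volume
      ≤ ∫⁻ x, ENNReal.ofReal (K * Real.exp (-(1/(8*v)) * x^2)) ∂volume := lintegral_mono hpt
    _ = ENNReal.ofReal (∫ x, K * Real.exp (-(1/(8*v)) * x^2) ∂volume) := by
        rw [ofReal_integral_eq_lintegral_ofReal]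
        · exact (integrable_exp_neg_mul_sq (by positivity)).const_mul K
        · apply Filter.Eventually.of_forall
          intro x
          positivity
    _ ≤ ENNReal.ofReal (2 * Real.exp (-(9/8)*c)) := by
        apply ENNReal.ofReal_le_ofReal
        rw [MeasureTheory.integral_const_mul, integral_gaussian]
        have h4 : Real.sqrt (π / (1/(8*v))) = 2 * Real.sqrt (2*π*v) := by
          rw [show π / (1/(8*v)) = 4*(2*π*v) by field_simp; ring,
            Real.sqrt_mul (by norm_num : (0:ℝ) ≤ 4),
            show Real.sqrt 4 = 2 by
              rw [show (4:ℝ) = 2^2 by norm_num, Real.sqrt_sq (by norm_num : (0:ℝ) ≤ 2)]]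
        rw [h4, hKdef]
        rw [show (Real.sqrt (2*π*v))⁻¹ * Real.exp (-(9/8)*c) * (2*Real.sqrt (2*π*v))
          = 2 * Real.exp (-(9/8)*c) * ((Real.sqrt (2*π*v))⁻¹ * Real.sqrt (2*π*v)) by ring,
          inv_mul_cancel₀ (ne_of_gt hsq), mul_one]

lemma my_summable_exp_int : Summable (fun n : ℤ => Real.exp (-(9/8) * |(n:ℝ)|)) := by
  apply Summable.of_nat_of_neg
  · apply Summable.congr (f := fun n : ℕ => Real.exp (-(9/8)) ^ n)
    · exact summable_geometric_of_lt_one (by positivity)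
        (Real.exp_lt_one_iff.mpr (by norm_num))
    · intro n
      rw [← Real.exp_nat_mul]
      congr 1
      rw [Int.cast_natCast, abs_of_nonneg (Nat.cast_nonneg n)]
      ring
  · apply Summable.congr (f := fun n : ℕ => Real.exp (-(9/8)) ^ n)
    · exact summable_geometric_of_lt_one (by positivity)
        (Real.exp_lt_one_iff.mpr (by norm_num))
    · intro n
      rw [← Real.exp_nat_mul]
      congr 1
      push_cast
      rw [abs_neg, abs_of_nonneg (Nat.cast_nonneg n)]
      ring

lemma my_summable_rpow : Summable (fun k : ℕ => ((2:ℝ) + (k:ℝ)) ^ (-(9/8) : ℝ)) := by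
  have h : Summable (fun n : ℕ => ((n:ℝ)) ^ (-(9/8) : ℝ)) :=
    Real.summable_nat_rpow.mpr (by norm_num)
  have h2 := (summable_nat_add_iff 2).mpr h
  apply h2.congr
  intro k
  push_cast
  ring_nf

lemma my_tsum_lt_top :
    (∑' p : ℤ × ℕ, ENNReal.ofReal (2 * Real.exp (-(9/8) *
      (1 + |(p.1:ℝ)| + Real.log (2 + (p.2:ℝ)))))) < ⊤ := by
  have hterm : ∀ p : ℤ × ℕ, 2 * Real.exp (-(9/8) * (1 + |(p.1:ℝ)| + Real.log (2 + (p.2:ℝ))))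
      = (2 * Real.exp (-(9/8)) * Real.exp (-(9/8) * |(p.1:ℝ)|)) *
        ((2 + (p.2:ℝ)) ^ (-(9/8) : ℝ)) := by
    intro p
    have hpos : (0:ℝ) < 2 + (p.2:ℝ) := by positivity
    rw [Real.rpow_def_of_pos hpos]
    rw [show -(9/8) * (1 + |(p.1:ℝ)| + Real.log (2 + (p.2:ℝ)))
      = (-(9/8)) + (-(9/8) * |(p.1:ℝ)|) + Real.log (2 + (p.2:ℝ)) * (-(9/8)) by ring]
    rw [Real.exp_add, Real.exp_add]
    ring
  have hsum : Summable (fun p : ℤ × ℕ =>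
      (2 * Real.exp (-(9/8)) * Real.exp (-(9/8) * |(p.1:ℝ)|)) *
        ((2 + (p.2:ℝ)) ^ (-(9/8) : ℝ))) := by
    apply Summable.mul_of_nonneg ((my_summable_exp_int.mul_left _)) my_summable_rpow
    · intro n
      positivity
    · intro k
      positivity
  have hsum2 : Summable (fun p : ℤ × ℕ =>
      2 * Real.exp (-(9/8) * (1 + |(p.1:ℝ)| + Real.log (2 + (p.2:ℝ))))) := by
    apply hsum.congr
    intro p
    rw [hterm p]
  rw [← ENNReal.ofReal_tsum_of_nonneg (fun p => by positivity) hsum2]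
  exact ENNReal.ofReal_lt_top

/-- `B` is a standard one-dimensional Brownian motion on `(Ω, P)`: measurable in `ω`,
starts at `0`, has continuous paths, Gaussian increments `B t - B s ~ N(0, t - s)`,
and independent increments. -/
def IsBrownianMotion {Ω : Type*} [MeasurableSpace Ω] (P : Measure Ω) (B : ℝ → Ω → ℝ) : Prop :=
  (∀ t : ℝ, Measurable (B t)) ∧
  (∀ ω, B 0 ω = 0) ∧
  (∀ ω, Continuous fun t => B t ω) ∧
  (∀ s t : ℝ, 0 ≤ s → s ≤ t →
    P.map (fun ω => B t ω - B s ω) = gaussianReal 0 (Real.toNNReal (t - s))) ∧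
  (∀ (n : ℕ) (u : Fin (n + 1) → ℝ), Monotone u → 0 ≤ u 0 →
    iIndepFun
      (fun i : Fin n => fun ω => B (u i.succ) ω - B (u i.castSucc) ω) P)

/-- **Theorem (exponential moments of the uniform modulus of continuity).**
For a standard Brownian motion `B` and `ε > 0`, the random variable
`M_B := sup_{0 < s < t < ∞} |B_t − B_s| / √((t−s)(1 + ln(t/(t−s)) + ε|ln t|))`
is such that `M_B²` admits exponential moments: there is `λ > 0` with
`E[exp(λ M_B²)] < ∞` (in particular the supremum is almost surely finite). -/
theorem brownian_uniform_modulus_exp_moments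
    {Ω : Type*} [MeasurableSpace Ω] (P : Measure Ω) [IsProbabilityMeasure P]
    (B : ℝ → Ω → ℝ) (hB : IsBrownianMotion P B) (ε : ℝ) (hε : 0 < ε) :
    ∃ lam : ℝ, 0 < lam ∧
      (∀ᵐ ω ∂P, BddAbove {r : ℝ | ∃ s t : ℝ, 0 < s ∧ s < t ∧
        r = |B t ω - B s ω| /
          Real.sqrt ((t - s) * (1 + Real.log (t / (t - s)) + ε * |Real.log t|))}) ∧
      ∫⁻ ω, ENNReal.ofReal (Real.exp (lam *
        (sSup {r : ℝ | ∃ s t : ℝ, 0 < s ∧ s < t ∧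
          r = |B t ω - B s ω| /
            Real.sqrt ((t - s) * (1 + Real.log (t / (t - s)) + ε * |Real.log t|))}) ^ 2)) ∂P
        < ⊤ := by
  classical
  obtain ⟨hmeas, hzero, hcont, hmap, hindep⟩ := hB
  set K : ℝ := 66 * Real.sqrt (max 1 ε⁻¹) with hKdef
  have hK1 : (1:ℝ) ≤ max 1 ε⁻¹ := le_max_left _ _
  have hKpos : 0 < K := by
    rw [hKdef]
    have : 0 < Real.sqrt (max 1 ε⁻¹) := Real.sqrt_pos.mpr (lt_of_lt_of_le one_pos hK1)
    positivity
  have hppos : ∀ n : ℤ, (0:ℝ) < (2:ℝ)^n := fun n => zpow_pos (by norm_num) n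
  set cc : ℤ × ℕ → ℝ := fun p => 1 + |(p.1:ℝ)| + Real.log (2 + (p.2:ℝ)) with hccdef
  have hcc1 : ∀ p : ℤ × ℕ, 1 ≤ cc p := by
    intro p
    have h1 : (0:ℝ) ≤ Real.log (2 + (p.2:ℝ)) :=
      Real.log_nonneg (by linarith [(Nat.cast_nonneg (p.2) : (0:ℝ) ≤ (p.2:ℝ))])
    have h2 := abs_nonneg ((p.1:ℝ))
    simp only [hccdef]
    linarith
  set vv : ℤ × ℕ → ℝ := fun p => (2:ℝ)^(-p.1) with hvvdef
  have hvpos : ∀ p : ℤ × ℕ, 0 < vv p := fun p => hppos _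
  have hvc : ∀ p : ℤ × ℕ, 0 < vv p * cc p :=
    fun p => mul_pos (hvpos p) (lt_of_lt_of_le one_pos (hcc1 p))
  set W : ℤ × ℕ → Ω → ℝ := fun p ω =>
    B (((p.2:ℝ)+1) * (2:ℝ)^(-p.1)) ω - B ((p.2:ℝ) * (2:ℝ)^(-p.1)) ω with hWdef
  have hWmeas : ∀ p : ℤ × ℕ, Measurable (W p) := fun p => (hmeas _).sub (hmeas _)
  have hWmap : ∀ p : ℤ × ℕ, P.map (W p) = gaussianReal 0 (Real.toNNReal (vv p)) := by
    intro p
    have h0 : (0:ℝ) ≤ (p.2:ℝ) * (2:ℝ)^(-p.1) := by positivity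
    have hle : (p.2:ℝ) * (2:ℝ)^(-p.1) ≤ ((p.2:ℝ)+1) * (2:ℝ)^(-p.1) := by
      nlinarith [hppos (-p.1)]
    have h := hmap _ _ h0 hle
    rw [show ((p.2:ℝ)+1) * (2:ℝ)^(-p.1) - (p.2:ℝ) * (2:ℝ)^(-p.1) = (2:ℝ)^(-p.1) by ring] at h
    exact h
  set F : ℤ × ℕ → ℝ → ℝ≥0∞ := fun p x =>
    ENNReal.ofReal (max (Real.exp (x^2 / (4*(vv p * cc p))) - Real.exp ((9:ℝ)/4)) 0) with hFdef
  have hFmeas : ∀ p : ℤ × ℕ, Measurable (F p) := by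
    intro p
    apply Measurable.ennreal_ofReal
    apply Measurable.max _ measurable_const
    apply Measurable.sub _ measurable_const
    exact (Real.continuous_exp.comp ((continuous_pow 2).div_const _)).measurable
  set T : Ω → ℝ≥0∞ := fun ω => ∑' p : ℤ × ℕ, F p (W p ω) with hTdef
  have hTm : Measurable T := Measurable.ennreal_tsum (fun p => (hFmeas p).comp (hWmeas p))
  have hTint : ∫⁻ ω, T ω ∂P ≤ ∑' p : ℤ × ℕ, ENNReal.ofReal (2 * Real.exp (-(9/8) * cc p)) := by
    simp only [hTdef]
    rw [lintegral_tsum (fun p => ((show Measurable fun ω => F p (W p ω) from (hFmeas p).comp (hWmeas p))).aemeasurable)]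
    apply ENNReal.tsum_le_tsum
    intro p
    have heq : ∫⁻ ω, F p (W p ω) ∂P = ∫⁻ x, F p x ∂(P.map (W p)) :=
      (lintegral_map (hFmeas p) (hWmeas p)).symm
    rw [heq, hWmap p]
    exact my_gauss_bound (hvpos p) (hcc1 p)
  have hTfin : ∫⁻ ω, T ω ∂P < ⊤ := by
    refine lt_of_le_of_lt hTint ?_
    simp only [hccdef]
    exact my_tsum_lt_top
  have hTae : ∀ᵐ ω ∂P, T ω < ⊤ := ae_lt_top hTm hTfin.ne
  set G : ℤ × ℕ → Ω → ℝ := fun p ω => |W p ω| / Real.sqrt (vv p * cc p) with hGdef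
  have hGnn : ∀ (p : ℤ × ℕ) (ω : Ω), 0 ≤ G p ω :=
    fun p ω => div_nonneg (abs_nonneg _) (Real.sqrt_nonneg _)
  have hGsq : ∀ (p : ℤ × ℕ) (ω : Ω), (G p ω)^2 = (W p ω)^2 / (vv p * cc p) := by
    intro p ω
    simp only [hGdef]
    rw [div_pow, sq_abs, Real.sq_sqrt (hvc p).le]
  set Xr : Ω → ℝ := fun ω => ⨆ p : ℤ × ℕ, G p ω with hXrdef
  -- boundedness on the good set
  have hgood : ∀ ω : Ω, T ω < ⊤ → BddAbove (Set.range (fun p : ℤ × ℕ => G p ω)) := by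
    intro ω hT
    by_contra hnb
    have hAinf : {p : ℤ × ℕ | 4 ≤ G p ω}.Infinite := by
      by_contra hfin
      rw [Set.not_infinite] at hfin
      apply hnb
      obtain ⟨M, hM⟩ := (hfin.image (fun p => G p ω)).bddAbove
      refine ⟨max M 4, ?_⟩
      rintro x ⟨p, rfl⟩
      rcases le_or_gt 4 (G p ω) with h4 | h4
      · exact le_trans (hM (Set.mem_image_of_mem _ h4)) (le_max_left _ _)
      · exact le_trans h4.le (le_max_right _ _)
    have hδ : ∀ p ∈ {p : ℤ × ℕ | 4 ≤ G p ω},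
        ENNReal.ofReal (Real.exp 4 - Real.exp ((9:ℝ)/4)) ≤ F p (W p ω) := by
      intro p hp
      simp only [Set.mem_setOf_eq] at hp
      simp only [hFdef]
      apply ENNReal.ofReal_le_ofReal
      refine le_max_of_le_left (sub_le_sub_right ?_ _)
      apply Real.exp_le_exp.mpr
      have h1 : (4:ℝ)^2 ≤ (G p ω)^2 := by nlinarith
      rw [hGsq p ω] at h1
      rw [le_div_iff₀ (hvc p)] at h1
      rw [le_div_iff₀ (by linarith [hvc p] : (0:ℝ) < 4*(vv p * cc p))]
      nlinarith [hvc p]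
    have htop : (⊤:ℝ≥0∞) ≤ T ω := by
      have hinf : Infinite {p : ℤ × ℕ // 4 ≤ G p ω} := hAinf.to_subtype
      have hne : ENNReal.ofReal (Real.exp 4 - Real.exp ((9:ℝ)/4)) ≠ 0 := by
        refine (ENNReal.ofReal_pos.mpr ?_).ne'
        have := Real.exp_lt_exp.mpr (show (9:ℝ)/4 < 4 by norm_num)
        linarith
      calc (⊤:ℝ≥0∞) = ∑' _ : {p : ℤ × ℕ // 4 ≤ G p ω},
            ENNReal.ofReal (Real.exp 4 - Real.exp ((9:ℝ)/4)) :=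
            (ENNReal.tsum_const_eq_top_of_ne_zero hne).symm
        _ ≤ ∑' q : {p : ℤ × ℕ // 4 ≤ G p ω}, F q.1 (W q.1 ω) :=
            ENNReal.tsum_le_tsum (fun q => hδ q.1 q.2)
        _ ≤ ∑' p : ℤ × ℕ, F p (W p ω) :=
            ENNReal.tsum_comp_le_tsum_of_injective Subtype.val_injective _
        _ = T ω := by simp only [hTdef]
    exact hT.ne (top_le_iff.mp htop)
  have hXub : ∀ ω : Ω, T ω < ⊤ → ∀ p : ℤ × ℕ, G p ω ≤ Xr ω :=
    fun ω hT p => le_ciSup (hgood ω hT) p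
  have hX0 : ∀ ω : Ω, T ω < ⊤ → 0 ≤ Xr ω :=
    fun ω hT => le_trans (hGnn (0,0) ω) (hXub ω hT (0,0))
  have hchain : ∀ ω : Ω, T ω < ⊤ → ∀ s t : ℝ, 0 < s → s < t →
      |B t ω - B s ω| ≤ 66 * Xr ω *
        Real.sqrt ((t-s) * (1 + Real.log (t/(t-s)) + |Real.log t|)) := by
    intro ω hT s t hs hst
    apply my_chaining (hcont ω) (hX0 ω hT) _ hs hst
    intro n k
    have h1 := hXub ω hT (n, k)
    have h2 : 0 < Real.sqrt (vv (n,k) * cc (n,k)) := Real.sqrt_pos.mpr (hvc _)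
    simp only [hGdef] at h1
    rw [div_le_iff₀ h2] at h1
    have h3 : Real.sqrt (vv (n,k) * cc (n,k))
        = Real.sqrt ((2:ℝ)^(-n) * (1 + |(n:ℝ)| + Real.log (2 + (k:ℝ)))) := by
      simp only [hvvdef, hccdef]
    rw [h3] at h1
    simp only [hWdef] at h1
    exact h1
  -- bound on elements of the sup set
  have hSbdd : ∀ ω : Ω, T ω < ⊤ → ∀ r ∈ {r : ℝ | ∃ s t : ℝ, 0 < s ∧ s < t ∧
      r = |B t ω - B s ω| /
        Real.sqrt ((t - s) * (1 + Real.log (t / (t - s)) + ε * |Real.log t|))},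
      r ≤ K * Xr ω := by
    intro ω hT r hr
    obtain ⟨s, t, hs, hst, rfl⟩ := hr
    have hh : 0 < t - s := by linarith
    have hlogth : 0 ≤ Real.log (t/(t-s)) :=
      Real.log_nonneg (by rw [le_div_iff₀ hh]; linarith)
    have habs := abs_nonneg (Real.log t)
    have hL : 0 < (t-s) * (1 + Real.log (t/(t-s)) + ε * |Real.log t|) :=
      mul_pos hh (by nlinarith [mul_nonneg hε.le habs])
    rw [div_le_iff₀ (Real.sqrt_pos.mpr hL)]
    have hc := hchain ω hT s t hs hst
    have hm : (t-s) * (1 + Real.log (t/(t-s)) + |Real.log t|)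
        ≤ (max 1 ε⁻¹) * ((t-s) * (1 + Real.log (t/(t-s)) + ε * |Real.log t|)) := by
      have h2 : ε⁻¹ ≤ max 1 ε⁻¹ := le_max_right _ _
      have h3 : |Real.log t| ≤ (max 1 ε⁻¹) * (ε * |Real.log t|) := by
        have hone : (1:ℝ) ≤ (max 1 ε⁻¹) * ε := by
          calc (1:ℝ) = ε⁻¹ * ε := (inv_mul_cancel₀ hε.ne').symm
            _ ≤ (max 1 ε⁻¹) * ε := mul_le_mul_of_nonneg_right h2 hε.le
        calc |Real.log t| = 1 * |Real.log t| := (one_mul _).symm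
          _ ≤ ((max 1 ε⁻¹) * ε) * |Real.log t| := mul_le_mul_of_nonneg_right hone habs
          _ = (max 1 ε⁻¹) * (ε * |Real.log t|) := by ring
      have h5 : 1 + Real.log (t/(t-s)) ≤ (max 1 ε⁻¹) * (1 + Real.log (t/(t-s))) :=
        le_mul_of_one_le_left (by linarith) hK1
      have h4 : 1 + Real.log (t/(t-s)) + |Real.log t|
          ≤ (max 1 ε⁻¹) * (1 + Real.log (t/(t-s)) + ε * |Real.log t|) := by
        have e : (max 1 ε⁻¹) * (1 + Real.log (t/(t-s)) + ε * |Real.log t|)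
            = (max 1 ε⁻¹) * (1 + Real.log (t/(t-s))) + (max 1 ε⁻¹) * (ε * |Real.log t|) := by
          ring
        rw [e]
        linarith
      calc (t-s) * (1 + Real.log (t/(t-s)) + |Real.log t|)
          ≤ (t-s) * ((max 1 ε⁻¹) * (1 + Real.log (t/(t-s)) + ε * |Real.log t|)) :=
            mul_le_mul_of_nonneg_left h4 hh.le
        _ = (max 1 ε⁻¹) * ((t-s) * (1 + Real.log (t/(t-s)) + ε * |Real.log t|)) := by ring
    have hsq : Real.sqrt ((t-s) * (1 + Real.log (t/(t-s)) + |Real.log t|))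
        ≤ Real.sqrt (max 1 ε⁻¹) *
          Real.sqrt ((t-s) * (1 + Real.log (t/(t-s)) + ε * |Real.log t|)) := by
      rw [← Real.sqrt_mul (le_trans zero_le_one hK1)]
      exact Real.sqrt_le_sqrt hm
    calc |B t ω - B s ω|
        ≤ 66 * Xr ω * Real.sqrt ((t-s) * (1 + Real.log (t/(t-s)) + |Real.log t|)) := hc
      _ ≤ 66 * Xr ω * (Real.sqrt (max 1 ε⁻¹) *
            Real.sqrt ((t-s) * (1 + Real.log (t/(t-s)) + ε * |Real.log t|))) := by
          apply mul_le_mul_of_nonneg_left hsq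
          have := hX0 ω hT
          positivity
      _ = K * Xr ω * Real.sqrt ((t-s) * (1 + Real.log (t/(t-s)) + ε * |Real.log t|)) := by
          rw [hKdef]; ring
  refine ⟨1/(4*K^2), by positivity, ?_, ?_⟩
  · filter_upwards [hTae] with ω hT
    exact ⟨K * Xr ω, fun r hr => hSbdd ω hT r hr⟩
  · have hintbnd : ∀ᵐ ω ∂P, ENNReal.ofReal (Real.exp ((1/(4*K^2)) *
        (sSup {r : ℝ | ∃ s t : ℝ, 0 < s ∧ s < t ∧
          r = |B t ω - B s ω| /
            Real.sqrt ((t - s) * (1 + Real.log (t / (t - s)) + ε * |Real.log t|))}) ^ 2))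
        ≤ ENNReal.ofReal (Real.exp ((9:ℝ)/4)) + T ω := by
      filter_upwards [hTae] with ω hT
      set Sω := {r : ℝ | ∃ s t : ℝ, 0 < s ∧ s < t ∧
          r = |B t ω - B s ω| /
            Real.sqrt ((t - s) * (1 + Real.log (t / (t - s)) + ε * |Real.log t|))} with hSdef
      have hbdd : BddAbove Sω := ⟨K * Xr ω, fun r hr => hSbdd ω hT r hr⟩
      have hr₀S : (|B 2 ω - B 1 ω| /
          Real.sqrt ((2 - 1) * (1 + Real.log (2 / (2 - 1)) + ε * |Real.log 2|))) ∈ Sω :=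
        ⟨1, 2, one_pos, one_lt_two, rfl⟩
      have hr₀0 : 0 ≤ |B 2 ω - B 1 ω| /
          Real.sqrt ((2 - 1) * (1 + Real.log (2 / (2 - 1)) + ε * |Real.log 2|)) :=
        div_nonneg (abs_nonneg _) (Real.sqrt_nonneg _)
      have hsup0 : 0 ≤ sSup Sω := le_trans hr₀0 (le_csSup hbdd hr₀S)
      have hsupK : sSup Sω ≤ K * Xr ω :=
        csSup_le ⟨_, hr₀S⟩ (fun r hr => hSbdd ω hT r hr)
      have hsq : (sSup Sω)^2 ≤ (K * Xr ω)^2 := by nlinarith [hX0 ω hT, hKpos]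
      have hlam : (1/(4*K^2)) * (sSup Sω)^2 ≤ (Xr ω)^2/4 := by
        have hK2 : (0:ℝ) < K^2 := by positivity
        calc (1/(4*K^2)) * (sSup Sω)^2 ≤ (1/(4*K^2)) * (K * Xr ω)^2 :=
              mul_le_mul_of_nonneg_left hsq (by positivity)
          _ = (Xr ω)^2/4 := by field_simp
      set Φ : ℝ → ℝ := fun x => max (Real.exp ((max x 0)^2/4) - Real.exp ((9:ℝ)/4)) 0 with hΦdef
      have hΦmono : Monotone Φ := by
        intro a b hab
        simp only [hΦdef]
        apply max_le_max _ le_rfl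
        apply sub_le_sub_right
        apply Real.exp_le_exp.mpr
        have h1 : max a 0 ≤ max b 0 := max_le_max hab le_rfl
        have h2 : (0:ℝ) ≤ max a 0 := le_max_right _ _
        nlinarith
      have hΦcont : Continuous Φ := by
        apply Continuous.max _ continuous_const
        apply Continuous.sub _ continuous_const
        apply Real.continuous_exp.comp
        exact ((continuous_id.max continuous_const).pow 2).div_const 4
      have hΦsup : Φ (Xr ω) = ⨆ p : ℤ × ℕ, Φ (G p ω) := by
        simp only [hXrdef]
        exact Monotone.map_ciSup_of_continuousAt hΦcont.continuousAt hΦmono (hgood ω hT)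
      have hΦle : ∀ p : ℤ × ℕ, ENNReal.ofReal (Φ (G p ω)) = F p (W p ω) := by
        intro p
        simp only [hΦdef, hFdef]
        congr 3
        rw [max_eq_left (hGnn p ω), hGsq p ω]
        rw [div_div]
        ring_nf
      have hΦT : ENNReal.ofReal (Φ (Xr ω)) ≤ T ω := by
        have hTne : T ω ≠ ⊤ := hT.ne
        have h1 : ∀ p : ℤ × ℕ, Φ (G p ω) ≤ (T ω).toReal := by
          intro p
          apply (ENNReal.ofReal_le_iff_le_toReal hTne).mp
          rw [hΦle p]
          exact ENNReal.le_tsum p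
        have h2 : Φ (Xr ω) ≤ (T ω).toReal := by
          rw [hΦsup]
          exact ciSup_le h1
        calc ENNReal.ofReal (Φ (Xr ω)) ≤ ENNReal.ofReal ((T ω).toReal) :=
              ENNReal.ofReal_le_ofReal h2
          _ = T ω := ENNReal.ofReal_toReal hTne
      have hexp : Real.exp ((1/(4*K^2)) * (sSup Sω)^2) ≤ Real.exp ((9:ℝ)/4) + Φ (Xr ω) := by
        have h1 : Real.exp ((1/(4*K^2)) * (sSup Sω)^2) ≤ Real.exp ((Xr ω)^2/4) :=
          Real.exp_le_exp.mpr hlam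
        have h2 : Real.exp ((Xr ω)^2/4) - Real.exp ((9:ℝ)/4) ≤ Φ (Xr ω) := by
          simp only [hΦdef]
          rw [max_eq_left (hX0 ω hT)]
          exact le_max_left _ _
        linarith
      calc ENNReal.ofReal (Real.exp ((1/(4*K^2)) * (sSup Sω)^2))
          ≤ ENNReal.ofReal (Real.exp ((9:ℝ)/4) + Φ (Xr ω)) := ENNReal.ofReal_le_ofReal hexp
        _ ≤ ENNReal.ofReal (Real.exp ((9:ℝ)/4)) + ENNReal.ofReal (Φ (Xr ω)) :=
            ENNReal.ofReal_add_le
        _ ≤ ENNReal.ofReal (Real.exp ((9:ℝ)/4)) + T ω := add_le_add (le_refl _) hΦT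
    calc ∫⁻ ω, ENNReal.ofReal (Real.exp ((1/(4*K^2)) *
          (sSup {r : ℝ | ∃ s t : ℝ, 0 < s ∧ s < t ∧
            r = |B t ω - B s ω| /
              Real.sqrt ((t - s) * (1 + Real.log (t / (t - s)) + ε * |Real.log t|))}) ^ 2)) ∂P
        ≤ ∫⁻ ω, (ENNReal.ofReal (Real.exp ((9:ℝ)/4)) + T ω) ∂P := lintegral_mono_ae hintbnd
      _ = ENNReal.ofReal (Real.exp ((9:ℝ)/4)) + ∫⁻ ω, T ω ∂P := by
          rw [lintegral_add_left measurable_const, lintegral_const, measure_univ, mul_one]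
      _ < ⊤ := ENNReal.add_lt_top.mpr ⟨ENNReal.ofReal_lt_top, hTfin⟩
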